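/- Let w be a word, let y be a nonempty word, and let s be a position such that y ++ y occurs in w at position s. Then there exist a maximal local power (p, θ, e) of w and natural numbers i ≥ 0 and j ≥ 1 such that y = θ^j, s = p + i·|θ|, and i + 2j ≤ e. -/
import Mathlib


/-- `wpow u k` is the `k`-fold concatenation of the word `u` with itself. -/
def wpow {α : Type*} (u : List α) : ℕ → List α
  | 0 => []
  | k + 1 => u ++ wpow u k

/-- `u` occurs in `w` at position `j` (0-indexed). -/
def Occurs {α : Type*} (u w : List α) (j : ℕ) : Prop :=
  u <+: w.drop j

/-- A nonempty word is primitive if it is not a proper power. -/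
def Primitive {α : Type*} (p : List α) : Prop :=
  p ≠ [] ∧ ∀ (u : List α) (k : ℕ), 2 ≤ k → p ≠ wpow u k

/-- `(p, θ, e)` is a maximal local power of `w`. -/
def MaxLocalPower {α : Type*} (w : List α) (p : ℕ) (θ : List α) (e : ℕ) : Prop :=
  Primitive θ ∧ 2 ≤ e ∧ Occurs (wpow θ e) w p ∧
    ¬ θ <:+ w.take p ∧ ¬ Occurs θ w (p + e * θ.length)

lemma wpow_length {α : Type*} (u : List α) (k : ℕ) : (wpow u k).length = k * u.length := by
  induction k with
  | zero => simp [wpow]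
  | succ n ih => simp [wpow, ih, Nat.succ_mul]; ring

lemma wpow_add {α : Type*} (u : List α) (m n : ℕ) :
    wpow u (m + n) = wpow u m ++ wpow u n := by
  induction m with
  | zero => simp [wpow]
  | succ m ih => simp [wpow, Nat.succ_add, ih]

lemma wpow_nil {α : Type*} (k : ℕ) : wpow ([] : List α) k = [] := by
  induction k <;> simp [wpow, *]

lemma wpow_mul {α : Type*} (u : List α) (m k : ℕ) :
    wpow (wpow u m) k = wpow u (m * k) := by
  induction k with
  | zero => simp [wpow]
  | succ k ih =>
    rw [wpow, ih, Nat.mul_succ, Nat.add_comm, wpow_add]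

lemma wpow_one {α : Type*} (u : List α) : wpow u 1 = u := by
  show u ++ wpow u 0 = u
  simp [wpow]

lemma exists_prim_root {α : Type*} :
    ∀ (n : ℕ) (y : List α), y.length ≤ n → y ≠ [] →
      ∃ θ j, Primitive θ ∧ 1 ≤ j ∧ y = wpow θ j := by
  intro n
  induction n with
  | zero =>
    intro y hl hy
    interval_cases h : y.length
    · exact absurd (List.length_eq_zero_iff.mp h) hy
  | succ n ih =>
    intro y hl hy
    by_cases hp : Primitive y
    · exact ⟨y, 1, hp, le_refl 1, by simp [wpow]⟩
    · rw [Primitive] at hp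
      push_neg at hp
      obtain ⟨u, k, hk, hyu⟩ := hp hy
      have hu : u ≠ [] := by
        intro h0; subst h0; rw [wpow_nil] at hyu; exact hy hyu
      have hupos : 1 ≤ u.length := List.length_pos_iff.mpr hu
      have hylen : y.length = k * u.length := by rw [hyu, wpow_length]
      have hun : u.length ≤ n := by nlinarith
      obtain ⟨θ, m, hθ, hm, hum⟩ := ih u hun hu
      refine ⟨θ, m * k, hθ, Nat.one_le_iff_ne_zero.mpr ?_, ?_⟩
      · positivity
      · rw [hyu, hum, wpow_mul]

lemma occurs_append {α : Type*} {x u w : List α} {p : ℕ}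
    (hx : Occurs x w p) (hu : Occurs u w (p + x.length)) : Occurs (x ++ u) w p := by
  obtain ⟨t, ht⟩ := hx
  obtain ⟨r, hr⟩ := hu
  have hdrop : w.drop (p + x.length) = t := by
    rw [← List.drop_drop, ← ht, List.drop_left]
  refine ⟨r, ?_⟩
  rw [List.append_assoc, ← ht]
  congr 1
  rw [hr, hdrop]

lemma occurs_left {α : Type*} {θ x w : List α} {p : ℕ} (hpw : p ≤ w.length)
    (hsuf : θ <:+ w.take p) (hx : Occurs x w p) : Occurs (θ ++ x) w (p - θ.length) := by
  obtain ⟨t, ht⟩ := hsuf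
  have hlen : t.length = p - θ.length := by
    have := congrArg List.length ht
    simp [List.length_take] at this
    omega
  have hw : w.drop (p - θ.length) = θ ++ w.drop p := by
    conv_lhs => rw [← List.take_append_drop p w, ← ht]
    rw [List.append_assoc, ← hlen, List.drop_left]
  obtain ⟨r, hr⟩ := hx
  refine ⟨r, ?_⟩
  rw [hw, List.append_assoc, hr]

lemma occurs_length {α : Type*} {u w : List α} {p : ℕ} (h : Occurs u w p) :
    u.length ≤ w.length - p := by
  have := h.length_le
  simpa using this

theorem stmt2' {α : Type*} (w y : List α) (hy : y ≠ []) (s : ℕ)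
    (h : Occurs (y ++ y) w s) :
    ∃ (p : ℕ) (θ : List α) (e : ℕ),
      (Primitive θ ∧ 2 ≤ e ∧ Occurs (wpow θ e) w p ∧
        ¬ θ <:+ w.take p ∧ ¬ Occurs θ w (p + e * θ.length)) ∧
      ∃ i j : ℕ, 1 ≤ j ∧ y = wpow θ j ∧ s = p + i * θ.length ∧ i + 2 * j ≤ e := by
  classical
  obtain ⟨θ, j, hθ, hj, hyθ⟩ := exists_prim_root y.length y le_rfl hy
  have hθne : θ ≠ [] := hθ.1
  have hLpos : 0 < θ.length := List.length_pos_iff.mpr hθne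
  have h2j : Occurs (wpow θ (2 * j)) w s := by
    have : y ++ y = wpow θ (2 * j) := by
      rw [hyθ, ← wpow_add, Nat.two_mul]
    rwa [this] at h
  have hylen : 1 ≤ y.length := List.length_pos_iff.mpr hy
  have hslen : s + 2 ≤ w.length := by
    have := occurs_length h
    simp only [List.length_append] at this
    omega
  set P : ℕ → Prop := fun a => a * θ.length ≤ s ∧
      Occurs (wpow θ (a + 2 * j)) w (s - a * θ.length) with hP
  have hP0 : P 0 := by simpa [hP] using h2j
  have hPa : P (Nat.findGreatest P s) := Nat.findGreatest_spec (Nat.zero_le s) hP0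
  set a := Nat.findGreatest P s with ha
  set p := s - a * θ.length with hp
  have hps : p ≤ s := Nat.sub_le _ _
  -- no left extension
  have hnotsuf : ¬ θ <:+ w.take p := by
    intro hsuf
    have hθle : θ.length ≤ p := by
      have h1 := hsuf.length_le
      simp only [List.length_take] at h1
      omega
    have hocc : Occurs (θ ++ wpow θ (a + 2 * j)) w (p - θ.length) :=
      occurs_left (by omega) hsuf hPa.2
    have hmul : (a + 1) * θ.length = a * θ.length + θ.length := by ring
    have hle : (a + 1) * θ.length ≤ s := by omega
    have hocc' : Occurs (wpow θ (a + 1 + 2 * j)) w (s - (a + 1) * θ.length) := by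
      rw [show s - (a + 1) * θ.length = p - θ.length by omega,
        show a + 1 + 2 * j = 1 + (a + 2 * j) by ring, wpow_add θ 1 (a + 2 * j), wpow_one]
      exact hocc
    have hP1 : P (a + 1) := ⟨hle, hocc'⟩
    have hbound : a + 1 ≤ s := by
      have : a + 1 ≤ (a + 1) * θ.length := Nat.le_mul_of_pos_right _ hLpos
      omega
    exact Nat.findGreatest_is_greatest (Nat.lt_succ_self a) hbound hP1
  -- right maximization
  set Q : ℕ → Prop := fun b => Occurs (wpow θ (a + 2 * j + b)) w p with hQ
  have hQ0 : Q 0 := by simpa [hQ] using hPa.2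
  have hQb : Q (Nat.findGreatest Q w.length) :=
    Nat.findGreatest_spec (Nat.zero_le _) hQ0
  set b := Nat.findGreatest Q w.length with hb
  set e := a + 2 * j + b with he
  have hnotr : ¬ Occurs θ w (p + e * θ.length) := by
    intro hr
    have hocc : Occurs (wpow θ e ++ θ) w p := by
      refine occurs_append hQb ?_
      rwa [wpow_length]
    have hQ1 : Q (b + 1) := by
      rw [hQ]
      show Occurs (wpow θ (a + 2 * j + (b + 1))) w p
      rw [show a + 2 * j + (b + 1) = e + 1 by omega, wpow_add θ e 1, wpow_one]
      exact hocc
    have hbound : b + 1 ≤ w.length := by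
      have h1 := occurs_length hQ1
      rw [wpow_length] at h1
      have h2 : b + 1 ≤ (a + 2 * j + (b + 1)) * θ.length :=
        le_trans (by omega) (Nat.le_mul_of_pos_right _ hLpos)
      omega
    exact Nat.findGreatest_is_greatest (Nat.lt_succ_self b) hbound hQ1
  refine ⟨p, θ, e, ⟨hθ, by omega, hQb, hnotsuf, hnotr⟩, a, j, hj, hyθ, by omega, by omega⟩

theorem stmt2 {α : Type*} (w y : List α) (hy : y ≠ []) (s : ℕ)
    (h : Occurs (y ++ y) w s) :
    ∃ (p : ℕ) (θ : List α) (e : ℕ), MaxLocalPower w p θ e ∧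
      ∃ i j : ℕ, 1 ≤ j ∧ y = wpow θ j ∧ s = p + i * θ.length ∧ i + 2 * j ≤ e := by
  simpa [MaxLocalPower] using stmt2' w y hy s h
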